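/- Three-point lemma for prox-mappings: Let U ⊆ ℝⁿ be convex, p, ω : U → ℝ differentiable convex functions, V(x,z) = ω(z) − ω(x) − ⟨∇ω(x), z−x⟩, and suppose û minimizes p(u) + V(ũ, u) over U. Then p(û) + V(ũ, û) + V(û, u) ≤ p(u) + V(ũ, u) for all u ∈ U. -/

import Mathlib

open scoped InnerProductSpace
open Filter

section Aux

variable {n : ℕ}

private lemma dir_deriv' {f : EuclideanSpace ℝ (Fin n) → ℝ} {g x : EuclideanSpace ℝ (Fin n)}
    (hf : HasGradientAt f g x) (d : EuclideanSpace ℝ (Fin n)) :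
    HasDerivAt (fun t : ℝ => f (x + t • d)) (⟪g, d⟫_ℝ) 0 := by
  have hl : HasDerivAt (fun t : ℝ => x + t • d) d 0 := by
    simpa using ((hasDerivAt_id (0:ℝ)).smul_const d).const_add x
  have hF : HasFDerivAt f (InnerProductSpace.toDual ℝ _ g) (x + (0:ℝ) • d) := by simpa using hasGradientAt_iff_hasFDerivAt.mp hf
  have := hF.comp_hasDerivAt (0:ℝ) hl
  simpa [InnerProductSpace.toDual_apply_apply, Function.comp_def] using this

private lemma slope_tendsto' {f : EuclideanSpace ℝ (Fin n) → ℝ} {g x : EuclideanSpace ℝ (Fin n)}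
    (hf : HasGradientAt f g x) (d : EuclideanSpace ℝ (Fin n)) :
    Tendsto (fun t : ℝ => (f (x + t • d) - f x) / t) (nhdsWithin 0 (Set.Ioi 0))
      (nhds (⟪g, d⟫_ℝ)) := by
  have h := (hasDerivAt_iff_tendsto_slope.mp (dir_deriv' hf d)).mono_left
    (nhdsWithin_mono 0 (fun t ht => ne_of_gt ht : Set.Ioi (0:ℝ) ⊆ {(0:ℝ)}ᶜ))
  refine h.congr (fun t => ?_)
  simp [slope_def_field, div_eq_inv_mul, mul_comm]

private lemma grad_ineq' {U : Set (EuclideanSpace ℝ (Fin n))}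
    {f : EuclideanSpace ℝ (Fin n) → ℝ} {g x y : EuclideanSpace ℝ (Fin n)}
    (hcv : ConvexOn ℝ U f) (hx : x ∈ U) (hy : y ∈ U)
    (hf : HasGradientAt f g x) : ⟪g, y - x⟫_ℝ ≤ f y - f x := by
  refine le_of_tendsto (slope_tendsto' hf (y - x)) ?_
  filter_upwards [Ioo_mem_nhdsGT_of_mem (by simp : (0:ℝ) ∈ Set.Ico 0 1)] with t ht
  have hcvx := hcv.2 hx hy (by linarith [ht.2] : (0:ℝ) ≤ 1 - t) (le_of_lt ht.1) (by ring)
  have h : f (x + t • (y - x)) ≤ (1 - t) * f x + t * f y := by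
    have e : x + t • (y - x) = (1 - t) • x + t • y := by module
    rw [e]
    simpa [smul_eq_mul] using hcvx
  rw [div_le_iff₀ ht.1]
  nlinarith [ht.1]

private lemma min_ineq' {U : Set (EuclideanSpace ℝ (Fin n))} (hU : Convex ℝ U)
    {f : EuclideanSpace ℝ (Fin n) → ℝ} {g x y : EuclideanSpace ℝ (Fin n)}
    (hmin : IsMinOn f U x) (hx : x ∈ U) (hy : y ∈ U)
    (hf : HasGradientAt f g x) : 0 ≤ ⟪g, y - x⟫_ℝ := by
  refine ge_of_tendsto (slope_tendsto' hf (y - x)) ?_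
  filter_upwards [Ioo_mem_nhdsGT_of_mem (by simp : (0:ℝ) ∈ Set.Ico 0 1)] with t ht
  have hmem : x + t • (y - x) ∈ U := by
    have := hU hx hy (by linarith [ht.2] : (0:ℝ) ≤ 1 - t) (le_of_lt ht.1) (by ring)
    convert this using 1
    module
  have h0 : f x ≤ f (x + t • (y - x)) := hmin hmem
  exact div_nonneg (by linarith) (le_of_lt ht.1)

end Aux

/-- The Bregman distance `V(x,z) = ω(z) − ω(x) − ⟨∇ω(x), z−x⟩`. -/
noncomputable def bregman {n : ℕ} (ω : EuclideanSpace ℝ (Fin n) → ℝ)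
    (gω : EuclideanSpace ℝ (Fin n) → EuclideanSpace ℝ (Fin n))
    (x z : EuclideanSpace ℝ (Fin n)) : ℝ :=
  ω z - ω x - ⟪gω x, z - x⟫_ℝ

private lemma bregman_grad {n : ℕ} (p ω : EuclideanSpace ℝ (Fin n) → ℝ)
    (gp gω : EuclideanSpace ℝ (Fin n) → EuclideanSpace ℝ (Fin n))
    (ut uh : EuclideanSpace ℝ (Fin n))
    (hp : HasGradientAt p (gp uh) uh) (hω : HasGradientAt ω (gω uh) uh) :
    HasGradientAt (fun u => p u + bregman ω gω ut u) (gp uh + gω uh - gω ut) uh := by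
  have hlin : HasFDerivAt (fun u => ⟪gω ut, u - ut⟫_ℝ)
      (InnerProductSpace.toDual ℝ (EuclideanSpace ℝ (Fin n)) (gω ut)) uh := by
    simpa [inner_sub_right] using
      ((InnerProductSpace.toDual ℝ (EuclideanSpace ℝ (Fin n)) (gω ut)).hasFDerivAt
        (x := uh)).sub_const ⟪gω ut, ut⟫_ℝ
  have hp' := hasGradientAt_iff_hasFDerivAt.mp hp
  have hω' := hasGradientAt_iff_hasFDerivAt.mp hω
  refine hasGradientAt_iff_hasFDerivAt.mpr ?_
  have h := ((hp'.add ((hω'.sub_const (ω ut)).sub hlin)))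
  have heq : (fun u => p u + bregman ω gω ut u)
      = fun u => p u + (ω u - ω ut - ⟪gω ut, u - ut⟫_ℝ) := by
    ext u; simp [bregman]
  rw [heq]
  convert h using 1
  · rfl
  · rfl
  · rfl
  · simp [map_add, map_sub, add_sub_assoc]

/-- Three-point lemma: if `û` minimizes `p(u) + V(ũ, u)` over the convex set `U`, then
`p(û) + V(ũ, û) + V(û, u) ≤ p(u) + V(ũ, u)` for all `u ∈ U`. -/
theorem stmt11 {n : ℕ} (U : Set (EuclideanSpace ℝ (Fin n))) (hU : Convex ℝ U)
    (p ω : EuclideanSpace ℝ (Fin n) → ℝ)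
    (gp gω : EuclideanSpace ℝ (Fin n) → EuclideanSpace ℝ (Fin n))
    (hpcv : ConvexOn ℝ U p) (hωcv : ConvexOn ℝ U ω)
    (hpgrad : ∀ u ∈ U, HasGradientAt p (gp u) u)
    (hωgrad : ∀ u ∈ U, HasGradientAt ω (gω u) u)
    (ut : EuclideanSpace ℝ (Fin n)) (hut : ut ∈ U)
    (uh : EuclideanSpace ℝ (Fin n)) (huh : uh ∈ U)
    (hmin : IsMinOn (fun u => p u + bregman ω gω ut u) U uh) :
    ∀ u ∈ U,
      p uh + bregman ω gω ut uh + bregman ω gω uh u ≤ p u + bregman ω gω ut u := by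
  intro u hu
  have hφ := bregman_grad p ω gp gω ut uh (hpgrad uh huh) (hωgrad uh huh)
  have hA : 0 ≤ ⟪gp uh + gω uh - gω ut, u - uh⟫_ℝ := min_ineq' hU hmin huh hu hφ
  have hB : ⟪gp uh, u - uh⟫_ℝ ≤ p u - p uh := grad_ineq' hpcv huh hu (hpgrad uh huh)
  have hid : ⟪gω ut, u - ut⟫_ℝ - ⟪gω ut, uh - ut⟫_ℝ = ⟪gω ut, u - uh⟫_ℝ := by
    rw [← inner_sub_right]
    congr 1
    abel
  simp only [inner_sub_left, inner_add_left] at hA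
  simp only [bregman]
  linarith
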